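/- Fix p_I > 0, T > 0, C ∈ ℝ, and λ > 0, and set Δg = g(1;λT) − g(0;λT). If λ·(4T − 2T·Δg) < 5·Δg + g(1;λT), then Δπ(5;λ,T) < 0 and hence n*(λ,T) ≤ 5, i.e. the incumbent departs with a partial load (n* < 6). -/

import Mathlib

open Real

/-- Truncated Poisson mean: `g(k;μ) = ∑_{m=0}^∞ min(m,k) · e^{−μ} μ^m / m!`. -/
noncomputable def truncMean (k : ℕ) (μ : ℝ) : ℝ :=
  ∑' m : ℕ, (min m k : ℝ) * (Real.exp (-μ) * μ ^ m / (m.factorial : ℝ))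

/-- Expected profit per unit time: `π(n;λ,T) = A(n)/B(n) − C` with
`A(n) = p_I (n + g(6−n;λT)/2)` and `B(n) = n/λ + 2T`. -/
noncomputable def profit (p_I C lam T : ℝ) (n : ℕ) : ℝ :=
  p_I * ((n : ℝ) + truncMean (6 - n) (lam * T) / 2) / ((n : ℝ) / lam + 2 * T) - C

/-- Profit increment `Δπ(n;λ,T) = π(n+1;λ,T) − π(n;λ,T)`. -/
noncomputable def dProfit (p_I C lam T : ℝ) (n : ℕ) : ℝ :=
  profit p_I C lam T (n + 1) - profit p_I C lam T n

/-- Optimal departure threshold: `n*(λ,T) = min{m ∈ {1,…,5} : Δπ(m;λ,T) ≤ 0}`, with the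
convention `n* = 6` if `Δπ(m;λ,T) > 0` for all `m ∈ {1,…,5}`. -/
noncomputable def nStar (p_I C lam T : ℝ) : ℕ :=
  sInf ({m : ℕ | m ∈ Finset.Icc 1 5 ∧ dProfit p_I C lam T m ≤ 0} ∪ {6})

/-- **Corollary 1 (entry-induced reduction in demand leads to partial departure).**
With `Δg = g(1;λT) − g(0;λT)`, if `λ (4T − 2T Δg) < 5 Δg + g(1;λT)` (i.e. `λ < λ₅†(T)`),
then `Δπ(5;λ,T) < 0` and hence `n*(λ,T) ≤ 5`: the incumbent departs with a partial load. -/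
theorem partial_departure_under_entry
    (p_I C lam T : ℝ) (hp : 0 < p_I) (hlam : 0 < lam) (hT : 0 < T)
    (Δg : ℝ) (hΔg : Δg = truncMean 1 (lam * T) - truncMean 0 (lam * T))
    (h : lam * (4 * T - 2 * T * Δg) < 5 * Δg + truncMean 1 (lam * T)) :
    dProfit p_I C lam T 5 < 0 ∧ nStar p_I C lam T ≤ 5 := by
  have hg0 : truncMean 0 (lam * T) = 0 := by
    simp [truncMean]
  set g := truncMean 1 (lam * T) with hg
  have hΔ : Δg = g := by rw [hΔg, hg0]; ring
  have h' : lam * (4 * T - 2 * T * g) < 6 * g := by rw [hΔ] at h; linarith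
  have hB5 : (0:ℝ) < (5:ℝ) / lam + 2 * T := by positivity
  have hB6 : (0:ℝ) < (6:ℝ) / lam + 2 * T := by positivity
  have hlam' : lam ≠ 0 := ne_of_gt hlam
  have key : dProfit p_I C lam T 5 =
      p_I * 6 / (6 / lam + 2 * T) - p_I * (5 + g / 2) / (5 / lam + 2 * T) := by
    show profit p_I C lam T 6 - profit p_I C lam T 5 = _
    simp [profit, hg0]
    rfl
  have hdpos : 0 < 3 * g / lam + T * g - 2 * T := by
    have h1 : 0 < (6 * g - lam * (4 * T - 2 * T * g)) / (2 * lam) :=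
      div_pos (by linarith) (by positivity)
    have h2 : (6 * g - lam * (4 * T - 2 * T * g)) / (2 * lam)
        = 3 * g / lam + T * g - 2 * T := by
      field_simp
      ring
    linarith [h2 ▸ h1]
  have hd : dProfit p_I C lam T 5 < 0 := by
    rw [key, sub_neg]
    rw [div_lt_div_iff₀ hB6 hB5]
    have e : p_I * (5 + g / 2) * (6 / lam + 2 * T) - p_I * 6 * (5 / lam + 2 * T)
        = p_I * (3 * g / lam + T * g - 2 * T) := by
      field_simp
      ring
    nlinarith [mul_pos hp hdpos, e]
  refine ⟨hd, ?_⟩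
  exact Nat.sInf_le (Set.mem_union_left _ ⟨by decide, hd.le⟩)
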